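/- Let G be a simple directed graph, d ≥ 2, and let N_{d−1} be the number of (d−1)-simplices of G. Define X_d = {(σ, σ') : σ, σ' are (d−1)-simplices of G with Ver(σ) = Ver(σ'), σ ≠ σ', and σ, σ' share a common boundary, i.e. ∂_i(σ) = ∂_{i'}(σ') for some i, i' ∈ {0, …, d−1}}. Then |X_d| ≤ d² · N_{d−1}. -/
import Mathlib


def IsSimplex {V : Type*} (E : V → V → Prop) {m : ℕ} (σ : Fin m → V) : Prop :=
  Function.Injective σ ∧ ∀ i j : Fin m, i < j → E (σ i) (σ j)

/-- If two injective tuples have the same range and share a facet (obtained by deleting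
the `i`-th resp. `i'`-th vertex), then the deleted vertices coincide. -/
lemma facet_determines_vertex {V : Type*} {m : ℕ} {σ σ' : Fin (m + 1) → V}
    (hσ' : Function.Injective σ') (hr : Set.range σ = Set.range σ')
    {i i' : Fin (m + 1)} (h : σ ∘ i.succAbove = σ' ∘ i'.succAbove) :
    σ' i' = σ i := by
  have hmem : σ' i' ∈ Set.range σ := hr ▸ Set.mem_range_self i'
  obtain ⟨k, hk⟩ := hmem
  rcases eq_or_ne k i with rfl | hne
  · exact hk.symm
  · obtain ⟨j, hj⟩ := Fin.exists_succAbove_eq hne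
    have heq : σ' (i'.succAbove j) = σ' i' := by
      have h1 := congrFun h j
      simp only [Function.comp] at h1
      rw [← h1, hj, hk]
    exact absurd (hσ' heq) (Fin.succAbove_ne i' j)

/-- A tuple with given range is determined by a facet together with the positions. -/
lemma facet_determines {V : Type*} {m : ℕ} {σ σ' τ : Fin (m + 1) → V}
    (hσ' : Function.Injective σ') (hτ : Function.Injective τ)
    (hr : Set.range σ = Set.range σ') (hr' : Set.range σ = Set.range τ)
    {i i' : Fin (m + 1)} (h : σ ∘ i.succAbove = σ' ∘ i'.succAbove)
    (h' : σ ∘ i.succAbove = τ ∘ i'.succAbove) : σ' = τ := by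
  funext k
  rcases eq_or_ne k i' with rfl | hne
  · rw [facet_determines_vertex hσ' hr h, facet_determines_vertex hτ hr' h']
  · obtain ⟨j, hj⟩ := Fin.exists_succAbove_eq hne
    rw [← hj]
    have h1 := congrFun h j
    have h2 := congrFun h' j
    simp only [Function.comp] at h1 h2
    rw [← h1, h2]

theorem X_d_bound {V : Type*} [Fintype V]
    (E : V → V → Prop) (hE : Irreflexive E) (n : ℕ) :
    {x : (Fin (n + 2) → V) × (Fin (n + 2) → V) |
        IsSimplex E x.1 ∧ IsSimplex E x.2 ∧
        Set.range x.1 = Set.range x.2 ∧ x.1 ≠ x.2 ∧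
        ∃ i i' : Fin (n + 2), x.1 ∘ i.succAbove = x.2 ∘ i'.succAbove}.ncard
      ≤ (n + 2) ^ 2 * {σ : Fin (n + 2) → V | IsSimplex E σ}.ncard := by
  classical
  set S := {σ : Fin (n + 2) → V | IsSimplex E σ} with hS
  set X := {x : (Fin (n + 2) → V) × (Fin (n + 2) → V) |
        IsSimplex E x.1 ∧ IsSimplex E x.2 ∧
        Set.range x.1 = Set.range x.2 ∧ x.1 ≠ x.2 ∧
        ∃ i i' : Fin (n + 2), x.1 ∘ i.succAbove = x.2 ∘ i'.succAbove} with hX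
  rw [← Nat.card_coe_set_eq, ← Nat.card_coe_set_eq]
  -- a witness-choosing function for shared facets
  obtain ⟨w, hw⟩ : ∃ w : (Fin (n + 2) → V) × (Fin (n + 2) → V) → Fin (n + 2) × Fin (n + 2),
      ∀ p : (Fin (n + 2) → V) × (Fin (n + 2) → V),
        (∃ i i' : Fin (n + 2), p.1 ∘ i.succAbove = p.2 ∘ i'.succAbove) →
        p.1 ∘ (w p).1.succAbove = p.2 ∘ (w p).2.succAbove := by
    refine ⟨fun p => if h : ∃ i i' : Fin (n + 2), p.1 ∘ i.succAbove = p.2 ∘ i'.succAbove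
      then ⟨h.choose, h.choose_spec.choose⟩ else default, fun p h => ?_⟩
    simp only [dif_pos h]
    exact h.choose_spec.choose_spec
  -- build an injection from X into Fin d × Fin d × S
  set f : X → Fin (n + 2) × Fin (n + 2) × S := fun x =>
    ⟨(w x.1).1, (w x.1).2, ⟨x.1.1, x.2.1⟩⟩ with hf
  have hinj : Function.Injective f := by
    intro x y hxy
    obtain ⟨hii, h2⟩ := Prod.ext_iff.mp hxy
    obtain ⟨hii', h3⟩ := Prod.ext_iff.mp h2
    have hσ : x.1.1 = y.1.1 := congrArg Subtype.val h3
    have hx5 := hw x.1 x.2.2.2.2.2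
    have hy5 := hw y.1 y.2.2.2.2.2
    simp only [hf] at hii hii'
    have hy5' : x.1.1 ∘ (w x.1).1.succAbove = y.1.2 ∘ (w x.1).2.succAbove := by
      rw [hσ, hii, hii']; exact hy5
    have hσ' : x.1.2 = y.1.2 :=
      facet_determines x.2.2.1.1 y.2.2.1.1 x.2.2.2.1 (hσ ▸ y.2.2.2.1) hx5 hy5'
    exact Subtype.ext (Prod.ext hσ hσ')
  calc Nat.card X ≤ Nat.card (Fin (n + 2) × Fin (n + 2) × S) :=
        Nat.card_le_card_of_injective f hinj
    _ = (n + 2) ^ 2 * Nat.card S := by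
        simp [Nat.card_prod, Nat.card_eq_fintype_card]; ring
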